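/- Let H = ⊕_{n≥0} H_n be a coradically graded pointed Hopf algebra with H_0 = kΓ for a finite group Γ, generated by Γ and skew-primitive elements x_1, …, x_θ with Δ(x_i) = x_i ⊗ g_i + 1 ⊗ x_i, g_i ∈ Γ, g_i ≠ 1. Suppose (K, r) is a braided central Hopf subalgebra of H with K ⊆ H_0. Then K = kG for a central subgroup G ⊆ Z(Γ), there is a group homomorphism Φ : G → Hom(Γ, k*) with r(γ, g) = ⟨γ, Φ(g)⟩ for γ ∈ Γ, g ∈ G, satisfying ⟨g', Φ(g)⟩ = 1 and g x_i g⁻¹ = ⟨g_i, Φ(g)⟩ x_i for all g, g' ∈ G and 1 ≤ i ≤ θ; moreover r vanishes on H_n ⊗ K for all n ≥ 1. -/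

import Mathlib

open TensorProduct
private lemma exists_dual_family {𝕜 V ι : Type*} [Field 𝕜] [AddCommGroup V] [Module 𝕜 V]
    [DecidableEq ι] {v : ι → V} (hv : LinearIndependent 𝕜 v) (i₀ : ι) :
    ∃ f : V →ₗ[𝕜] 𝕜, ∀ i, f (v i) = if i = i₀ then 1 else 0 := by
  classical
  have hs := hv.linearIndepOn_id
  have hmem : ∀ i, v i ∈ hs.extend (Set.subset_univ _) := fun i =>
    hs.subset_extend _ ⟨i, rfl⟩
  refine ⟨(Module.Basis.extend hs).coord ⟨v i₀, hmem i₀⟩, fun i => ?_⟩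
  have h1 : Module.Basis.extend hs ⟨v i, hmem i⟩ = v i := Module.Basis.extend_apply_self hs ⟨v i, hmem i⟩
  rw [Module.Basis.coord_apply, ← h1, Module.Basis.repr_self, Finsupp.single_apply]
  simp [Subtype.ext_iff, hv.injective.eq_iff]

set_option maxHeartbeats 1600000 in
/-- Proposition 3.3, one direction: a braided central Hopf subalgebra
(K, r) of a coradically graded pointed Hopf algebra H with K ⊆ H₀ = kΓ comes from a pair
(G, Φ) with G ⊆ Z(Γ) central and Φ : G → Γ̂ satisfying the stated conditions, and r
vanishes on H_n ⊗ K for n ≥ 1. -/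
theorem braided_central_of_pointed_gives_pair
    {𝕜 H K : Type*} [Field 𝕜] [IsAlgClosed 𝕜] [CharZero 𝕜]
    [Ring H] [HopfAlgebra 𝕜 H] [FiniteDimensional 𝕜 H]
    [Ring K] [HopfAlgebra 𝕜 K]
    {Γ : Type*} [Group Γ] [Fintype Γ]
    -- the grading of H
    (𝒜 : ℕ → Submodule 𝕜 H)
    (hinternal : DirectSum.IsInternal 𝒜)
    (hmul : ∀ {m n : ℕ} {a b : H}, a ∈ 𝒜 m → b ∈ 𝒜 n → a * b ∈ 𝒜 (m + n))
    (h1mem : (1 : H) ∈ 𝒜 0)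
    (hcomul_graded : ∀ (n : ℕ), ∀ h ∈ 𝒜 n, Coalgebra.comul (R := 𝕜) h ∈
      ⨆ p : {p : ℕ × ℕ // p.1 + p.2 = n},
        LinearMap.range (TensorProduct.map (𝒜 p.1.1).subtype (𝒜 p.1.2).subtype))
    -- H₀ = kΓ
    (gl : Γ →* H)
    (hgl_comul : ∀ γ : Γ, Coalgebra.comul (R := 𝕜) (gl γ) = gl γ ⊗ₜ[𝕜] gl γ)
    (hgl_counit : ∀ γ : Γ, Coalgebra.counit (R := 𝕜) (gl γ) = 1)
    (hgl_li : LinearIndependent 𝕜 (fun γ : Γ => gl γ))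
    (hgl_span : Submodule.span 𝕜 (Set.range gl) = 𝒜 0)
    -- the skew primitive generators x₁, ..., x_θ in degree one
    {θ : ℕ} (x : Fin θ → H) (gvec : Fin θ → Γ)
    (hx_mem : ∀ i, x i ∈ 𝒜 1)
    (hx_comul : ∀ i, Coalgebra.comul (R := 𝕜) (x i)
      = x i ⊗ₜ[𝕜] gl (gvec i) + (1 : H) ⊗ₜ[𝕜] x i)
    (hgvec_ne : ∀ i, gvec i ≠ 1)
    (hgen : Algebra.adjoin 𝕜 (Set.range gl ∪ Set.range x) = (⊤ : Subalgebra 𝕜 H))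
    -- (K, r) braided central with K ⊆ H₀
    (ι : K →ₐc[𝕜] H) (hι : Function.Injective ι)
    (hK0 : ∀ y : K, ι y ∈ 𝒜 0)
    (r : H →ₗ[𝕜] K →ₗ[𝕜] 𝕜)
    -- (2.1): r(hh', k) = r(h', k₁) r(h, k₂)
    (h21 : ∀ (h h' : H) (x : K), r (h * h') x
      = LinearMap.mul' 𝕜 𝕜 (TensorProduct.map (r h') (r h) (Coalgebra.comul (R := 𝕜) x)))
    -- (2.2): r(h, kk') = r(h₁, k) r(h₂, k')
    (h22 : ∀ (h : H) (x y : K), r h (x * y)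
      = LinearMap.mul' 𝕜 𝕜 (TensorProduct.map (r.flip x) (r.flip y) (Coalgebra.comul (R := 𝕜) h)))
    -- (2.3): r(h,1) = ε(h), r(1,k) = ε(k)
    (h23a : ∀ h : H, r h 1 = Coalgebra.counit (R := 𝕜) h)
    (h23b : ∀ x : K, r 1 x = Coalgebra.counit (R := 𝕜) x)
    -- (2.4): r(h₁, k₁) k₂ h₂ = h₁ k₁ r(h₂, k₂)
    (h24 : ∀ (h : H) (x : K),
      (TensorProduct.lid 𝕜 H) (TensorProduct.map (TensorProduct.lift r)
          ((LinearMap.mul' 𝕜 H) ∘ₗ (TensorProduct.map ι.toLinearMap LinearMap.id)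
            ∘ₗ (TensorProduct.comm 𝕜 H K).toLinearMap)
          ((TensorProduct.tensorTensorTensorComm 𝕜 H H K K)
            (Coalgebra.comul (R := 𝕜) h ⊗ₜ[𝕜] Coalgebra.comul (R := 𝕜) x)))
        = (TensorProduct.rid 𝕜 H) (TensorProduct.map
            ((LinearMap.mul' 𝕜 H) ∘ₗ (TensorProduct.map LinearMap.id ι.toLinearMap))
            (TensorProduct.lift r)
            ((TensorProduct.tensorTensorTensorComm 𝕜 H H K K)
              (Coalgebra.comul (R := 𝕜) h ⊗ₜ[𝕜] Coalgebra.comul (R := 𝕜) x))))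
    -- (2.5): r(k, k') = ε(k)ε(k')
    (h25 : ∀ x y : K, r (ι x) y = Coalgebra.counit (R := 𝕜) x * Coalgebra.counit (R := 𝕜) y)
    : ∃ G : Subgroup Γ, G ≤ Subgroup.center Γ ∧
      ∃ Φ : G →* (Γ →* 𝕜ˣ),
        -- K = kG
        (LinearMap.range ι.toLinearMap = Submodule.span 𝕜 (gl '' (G : Set Γ)))
        -- r(γ, g) = ⟨γ, Φ(g)⟩ on grouplikes
        ∧ (∀ (γ : Γ) (g : G) (y : K), ι y = gl (g : Γ) → r (gl γ) y = ((Φ g γ : 𝕜ˣ) : 𝕜))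
        -- ⟨g', Φ(g)⟩ = 1
        ∧ (∀ g g' : G, Φ g (g' : Γ) = 1)
        -- g x_i g⁻¹ = ⟨g_i, Φ(g)⟩ x_i
        ∧ (∀ (g : G) (i : Fin θ),
            gl (g : Γ) * x i = ((Φ g (gvec i) : 𝕜ˣ) : 𝕜) • (x i * gl (g : Γ)))
        -- r vanishes on H_n ⊗ K for n ≥ 1
        ∧ (∀ n : ℕ, 1 ≤ n → ∀ h ∈ 𝒜 n, ∀ y : K, r h y = 0) := by
  classical
  -- basics
  have hgl_inj : Function.Injective gl := hgl_li.injective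
  obtain ⟨π, hπ⟩ := ι.toLinearMap.exists_leftInverse_of_injective (LinearMap.ker_eq_bot.mpr hι)
  have hmapinj : Function.Injective (TensorProduct.map ι.toLinearMap ι.toLinearMap) := by
    have hcomp : TensorProduct.map π π ∘ₗ TensorProduct.map ι.toLinearMap ι.toLinearMap
        = LinearMap.id := by
      rw [← TensorProduct.map_comp, hπ, TensorProduct.map_id]
    intro a b hab
    have h1 := LinearMap.congr_fun hcomp a
    have h2 := LinearMap.congr_fun hcomp b
    simp only [LinearMap.comp_apply, LinearMap.id_apply] at h1 h2
    rw [← h1, ← h2, hab]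
  have hιcomul : ∀ y : K, Coalgebra.comul (R := 𝕜) (ι y)
      = TensorProduct.map ι.toLinearMap ι.toLinearMap (Coalgebra.comul y) := fun y =>
    (CoalgHomClass.map_comp_comul_apply ι y).symm
  have hιcounit : ∀ y : K, Coalgebra.counit (R := 𝕜) (ι y) = Coalgebra.counit (R := 𝕜) y :=
    fun y => CoalgHomClass.counit_comp_apply ι y
  -- grouplike elements of K
  have hgrpcomul : ∀ (g : Γ) (y : K), ι y = gl g → Coalgebra.comul (R := 𝕜) y = y ⊗ₜ[𝕜] y := by
    intro g y hy
    apply hmapinj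
    rw [← hιcomul, hy, hgl_comul, TensorProduct.map_tmul]
    have hy' : ι.toLinearMap y = gl g := hy
    rw [hy']
  have hgrpcounit : ∀ (g : Γ) (y : K), ι y = gl g → Coalgebra.counit (R := 𝕜) y = 1 := by
    intro g y hy
    have := hιcounit y
    rw [hy, hgl_counit] at this
    exact this.symm
  -- the subgroup G
  have hC1 : (1 : H) ∈ LinearMap.range ι.toLinearMap := ⟨1, map_one ι⟩
  have hCmul : ∀ a b : H, a ∈ LinearMap.range ι.toLinearMap →
      b ∈ LinearMap.range ι.toLinearMap → a * b ∈ LinearMap.range ι.toLinearMap := by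
    rintro a b ⟨u, rfl⟩ ⟨v, rfl⟩
    exact ⟨u * v, map_mul ι u v⟩
  have hCpow : ∀ (γ : Γ) (n : ℕ), gl γ ∈ LinearMap.range ι.toLinearMap →
      gl (γ ^ n) ∈ LinearMap.range ι.toLinearMap := by
    intro γ n hγ
    induction n with
    | zero => simpa using hC1
    | succ n ih =>
        rw [pow_succ, map_mul]
        exact hCmul _ _ ih hγ
  set G : Subgroup Γ :=
    { carrier := {γ | gl γ ∈ LinearMap.range ι.toLinearMap}
      one_mem' := by simpa using hC1
      mul_mem' := fun {a b} ha hb => by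
        simp only [Set.mem_setOf_eq, map_mul] at *
        exact hCmul _ _ ha hb
      inv_mem' := fun {γ} hγ => by
        simp only [Set.mem_setOf_eq] at *
        have hpow : γ ⁻¹ = γ ^ (Fintype.card Γ - 1) := by
          have hcard : γ ^ Fintype.card Γ = 1 := pow_card_eq_one
          have h1 : 1 ≤ Fintype.card Γ := Fintype.card_pos
          apply inv_eq_of_mul_eq_one_right
          rw [← pow_succ', Nat.sub_add_cancel h1, hcard]
        rw [hpow]
        exact hCpow _ _ hγ } with hGdef
  -- choice of group-like preimages
  have hyg : ∀ g : G, ∃ y : K, ι y = gl (g : Γ) := fun g => g.2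
  set yg : G → K := fun g => (hyg g).choose with hygdef
  have hygspec : ∀ g : G, ι (yg g) = gl (g : Γ) := fun g => (hyg g).choose_spec
  have hygcomul : ∀ g : G, Coalgebra.comul (R := 𝕜) (yg g) = yg g ⊗ₜ[𝕜] yg g :=
    fun g => hgrpcomul _ _ (hygspec g)
  have hygcounit : ∀ g : G, Coalgebra.counit (R := 𝕜) (yg g) = 1 :=
    fun g => hgrpcounit _ _ (hygspec g)
  -- multiplicativity of r against group-likes
  have hrmul : ∀ (g : G) (h h' : H), r (h * h') (yg g) = r h' (yg g) * r h (yg g) := by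
    intro g h h'
    rw [h21 h h' (yg g), hygcomul g, TensorProduct.map_tmul, LinearMap.mul'_apply]
  set φ : G → Γ → 𝕜 := fun g γ => r (gl γ) (yg g) with hφdef
  have hφ1 : ∀ g : G, φ g 1 = 1 := by
    intro g
    show r (gl 1) (yg g) = 1
    rw [map_one gl, h23b (yg g), hygcounit g]
  have hφmul : ∀ (g : G) (γ γ' : Γ), φ g (γ * γ') = φ g γ * φ g γ' := by
    intro g γ γ'
    show r (gl (γ * γ')) (yg g) = _
    rw [map_mul gl, hrmul g, mul_comm]
  have hφinv : ∀ (g : G) (γ : Γ), φ g γ * φ g γ⁻¹ = 1 := by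
    intro g γ
    rw [← hφmul, mul_inv_cancel, hφ1]
  have hφne : ∀ (g : G) (γ : Γ), φ g γ ≠ 0 := by
    intro g γ hz
    have := hφinv g γ
    rw [hz, zero_mul] at this
    exact zero_ne_one this
  -- centrality
  have hcent : G ≤ Subgroup.center Γ := by
    intro g hg
    rw [Subgroup.mem_center_iff]
    intro γ
    set g' : G := ⟨g, hg⟩
    have H24 := h24 (gl γ) (yg g')
    rw [hgl_comul γ, hygcomul g'] at H24
    simp only [TensorProduct.tensorTensorTensorComm_tmul, TensorProduct.map_tmul,
      TensorProduct.lift.tmul, LinearMap.coe_comp, Function.comp_apply,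
      LinearEquiv.coe_coe, TensorProduct.comm_tmul, LinearMap.id_coe, id_eq,
      LinearMap.mul'_apply, TensorProduct.lid_tmul, TensorProduct.rid_tmul] at H24
    have hid : ι.toLinearMap (yg g') = gl (g' : Γ) := hygspec g'
    rw [hid] at H24
    have hc := hφne g' γ
    have H24' : gl ((g' : Γ) * γ) = gl (γ * (g' : Γ)) := by
      have := smul_right_injective H hc H24
      rwa [← map_mul, ← map_mul] at this
    exact (hgl_inj H24').symm
  -- the homomorphism Φ
  have hyg_one : yg 1 = 1 := by
    apply hι
    rw [hygspec, map_one ι]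
    simp
  have hyg_mul : ∀ g g' : G, yg (g * g') = yg g * yg g' := by
    intro g g'
    apply hι
    rw [hygspec, map_mul ι, hygspec, hygspec, ← map_mul]
    norm_cast
  have hφmulG : ∀ (g g' : G) (γ : Γ), φ (g * g') γ = φ g γ * φ g' γ := by
    intro g g' γ
    show r (gl γ) (yg (g * g')) = _
    rw [hyg_mul, h22 (gl γ) (yg g) (yg g'), hgl_comul]
    simp only [TensorProduct.map_tmul, LinearMap.mul'_apply, LinearMap.flip_apply]
    rfl
  have hφoneG : ∀ γ : Γ, φ 1 γ = 1 := by
    intro γ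
    show r (gl γ) (yg 1) = 1
    rw [hyg_one, h23a, hgl_counit]
  set Φ : G →* (Γ →* 𝕜ˣ) :=
    { toFun := fun g =>
        { toFun := fun γ => Units.mk (φ g γ) (φ g γ⁻¹) (hφinv g γ)
            (by rw [mul_comm]; exact hφinv g γ)
          map_one' := Units.ext (by simpa using hφ1 g)
          map_mul' := fun γ γ' => Units.ext (by simpa using hφmul g γ γ') }
      map_one' := MonoidHom.ext fun γ => Units.ext (by simpa using hφoneG γ)
      map_mul' := fun g g' => MonoidHom.ext fun γ => Units.ext
        (by simpa using hφmulG g g' γ) } with hΦdef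
  have hΦval : ∀ (g : G) (γ : Γ), ((Φ g γ : 𝕜ˣ) : 𝕜) = r (gl γ) (yg g) := fun g γ => rfl
  -- conclusion 2
  have conc2 : ∀ (γ : Γ) (g : G) (y : K), ι y = gl (g : Γ) → r (gl γ) y = ((Φ g γ : 𝕜ˣ) : 𝕜) := by
    intro γ g y hy
    have : y = yg g := hι (by rw [hygspec g, hy])
    rw [this, hΦval]
  -- conclusion 3
  have conc3 : ∀ g g' : G, Φ g (g' : Γ) = 1 := by
    intro g g'
    apply Units.ext
    rw [hΦval]
    show r (gl (g' : Γ)) (yg g) = 1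
    rw [← hygspec g', h25, hygcounit, hygcounit, one_mul]
  -- conclusion 1
  have conc1 : LinearMap.range ι.toLinearMap = Submodule.span 𝕜 (gl '' (G : Set Γ)) := by
    apply le_antisymm
    · rintro _ ⟨y, rfl⟩
      have h0 : ι.toLinearMap y ∈ Submodule.span 𝕜 (Set.range gl) := by
        rw [hgl_span]; exact hK0 y
      rw [Submodule.mem_span_range_iff_exists_fun] at h0
      obtain ⟨c, hc⟩ := h0
      have hmemG : ∀ γ : Γ, c γ ≠ 0 → γ ∈ G := by
        intro γ₀ hne
        obtain ⟨f, hf⟩ := exists_dual_family hgl_li γ₀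
        set F : H ⊗[𝕜] H →ₗ[𝕜] H :=
          (TensorProduct.lid 𝕜 H).toLinearMap ∘ₗ TensorProduct.map f LinearMap.id with hF
        have hrange : ∀ z : K ⊗[𝕜] K,
            F (TensorProduct.map ι.toLinearMap ι.toLinearMap z) ∈ LinearMap.range ι.toLinearMap := by
          intro z
          induction z using TensorProduct.induction_on with
          | zero => simp
          | tmul u v =>
              simp only [TensorProduct.map_tmul, hF, LinearMap.coe_comp, Function.comp_apply,
                LinearEquiv.coe_coe, TensorProduct.lid_tmul, LinearMap.id_coe, id_eq]
              exact Submodule.smul_mem _ _ ⟨v, rfl⟩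
          | add u v hu hv => rw [map_add, map_add]; exact add_mem hu hv
        have key := hrange (Coalgebra.comul (R := 𝕜) y)
        rw [← hιcomul y] at key
        have hc' : ∑ γ : Γ, c γ • gl γ = ι y := hc
        have hcomul_eq : Coalgebra.comul (R := 𝕜) (ι y)
            = ∑ γ : Γ, c γ • (gl γ ⊗ₜ[𝕜] gl γ) := by
          rw [← hc', map_sum]
          refine Finset.sum_congr rfl fun γ _ => ?_
          rw [map_smul, hgl_comul]
        rw [hcomul_eq] at key
        have hFval : F (∑ γ : Γ, c γ • (gl γ ⊗ₜ[𝕜] gl γ)) = c γ₀ • gl γ₀ := by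
          rw [map_sum]
          have hterm : ∀ γ : Γ, F (c γ • (gl γ ⊗ₜ[𝕜] gl γ))
              = if γ = γ₀ then c γ • gl γ else 0 := by
            intro γ
            rw [map_smul]
            simp only [hF, LinearMap.coe_comp, Function.comp_apply, TensorProduct.map_tmul,
              LinearEquiv.coe_coe, TensorProduct.lid_tmul, LinearMap.id_coe, id_eq, hf γ]
            split_ifs with hh
            · simp
            · simp
          rw [Finset.sum_congr rfl fun γ _ => hterm γ]
          simp
        rw [hFval] at key
        have hkey2 := Submodule.smul_mem _ (c γ₀)⁻¹ key
        rwa [smul_smul, inv_mul_cancel₀ hne, one_smul] at hkey2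
      rw [← hc]
      refine Submodule.sum_mem _ fun γ _ => ?_
      by_cases hz : c γ = 0
      · simp [hz]
      · exact Submodule.smul_mem _ _ (Submodule.subset_span ⟨γ, hmemG γ hz, rfl⟩)
    · rw [Submodule.span_le]
      rintro _ ⟨γ, hγ, rfl⟩
      exact hγ
  -- degree memberships
  have hgl_mem0 : ∀ γ : Γ, gl γ ∈ 𝒜 0 := fun γ => by
    rw [← hgl_span]; exact Submodule.subset_span ⟨γ, rfl⟩
  have hdisj01 : Disjoint (𝒜 0) (𝒜 1) :=
    hinternal.submodule_iSupIndep.pairwiseDisjoint (by norm_num)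
  have hkey4 : ∀ (g : G) (i : Fin θ),
      r (x i) (yg g) = 0 ∧ gl (g : Γ) * x i = (φ g (gvec i)) • (x i * gl (g : Γ)) := by
    intro g i
    have H24 := h24 (x i) (yg g)
    rw [hx_comul i, hygcomul g] at H24
    simp only [TensorProduct.add_tmul, map_add, TensorProduct.tensorTensorTensorComm_tmul,
      TensorProduct.map_tmul, TensorProduct.lift.tmul, LinearMap.coe_comp, Function.comp_apply,
      LinearEquiv.coe_coe, TensorProduct.comm_tmul, LinearMap.id_coe, id_eq,
      LinearMap.mul'_apply, TensorProduct.lid_tmul, TensorProduct.rid_tmul] at H24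
    have hid : ι.toLinearMap (yg g) = gl (g : Γ) := hygspec g
    rw [hid, h23b (yg g), hygcounit g, one_smul, one_mul, ← map_mul gl] at H24
    -- H24 : c • gl (g * gvec i) + gl g * x i = u • (x i * gl g) + c • gl g
    have heq : r (x i) (yg g) • gl ((g : Γ) * gvec i) - r (x i) (yg g) • gl (g : Γ)
        = r (gl (gvec i)) (yg g) • (x i * gl (g : Γ)) - gl (g : Γ) * x i :=
      sub_eq_sub_iff_add_eq_add.mpr H24
    have hx1 : x i * gl (g : Γ) ∈ 𝒜 1 := by
      have := hmul (hx_mem i) (hgl_mem0 (g : Γ)); simpa using this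
    have hx2 : gl (g : Γ) * x i ∈ 𝒜 1 := by
      have := hmul (hgl_mem0 (g : Γ)) (hx_mem i); simpa using this
    have hm0 : r (x i) (yg g) • gl ((g : Γ) * gvec i) - r (x i) (yg g) • gl (g : Γ) ∈ 𝒜 0 :=
      sub_mem (Submodule.smul_mem _ _ (hgl_mem0 _)) (Submodule.smul_mem _ _ (hgl_mem0 _))
    have hm1 : r (x i) (yg g) • gl ((g : Γ) * gvec i) - r (x i) (yg g) • gl (g : Γ) ∈ 𝒜 1 := by
      rw [heq]
      exact sub_mem (Submodule.smul_mem _ _ hx1) hx2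
    have hE0 : r (x i) (yg g) • gl ((g : Γ) * gvec i) - r (x i) (yg g) • gl (g : Γ) = 0 :=
      Submodule.disjoint_def.mp hdisj01 _ hm0 hm1
    have hc0 : r (x i) (yg g) = 0 := by
      by_contra hne
      have : gl ((g : Γ) * gvec i) = gl (g : Γ) :=
        smul_right_injective H hne (by rw [sub_eq_zero] at hE0; exact hE0)
      have := hgl_inj this
      rw [mul_eq_left] at this
      exact hgvec_ne i this
    have hE1 : r (gl (gvec i)) (yg g) • (x i * gl (g : Γ)) - gl (g : Γ) * x i = 0 := by
      rw [← heq, hE0]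
    exact ⟨hc0, ((sub_eq_zero.mp hE1)).symm⟩
  -- conclusion 4
  have conc4 : ∀ (g : G) (i : Fin θ),
      gl (g : Γ) * x i = ((Φ g (gvec i) : 𝕜ˣ) : 𝕜) • (x i * gl (g : Γ)) := by
    intro g i
    rw [hΦval]
    exact (hkey4 g i).2
  -- r vanishes in positive degrees against group-like preimages
  have hvanish_yg : ∀ (g : G) (n : ℕ), 1 ≤ n → ∀ h ∈ 𝒜 n, r h (yg g) = 0 := by
    intro g
    set Ng : Submodule 𝕜 H := ⨆ m : {m : ℕ // 1 ≤ m}, (𝒜 m ⊓ LinearMap.ker (r.flip (yg g)))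
      with hNgdef
    have hNg_ker : ∀ b ∈ Ng, r b (yg g) = 0 := by
      intro b hb
      have := iSup_le (fun m : {m : ℕ // 1 ≤ m} =>
        (inf_le_right : 𝒜 m ⊓ LinearMap.ker (r.flip (yg g)) ≤ _)) hb
      simpa using this
    have hNg_deg : Ng ≤ ⨆ m : {m : ℕ // 1 ≤ m}, 𝒜 m := iSup_mono fun m => inf_le_left
    have hmem_Ng : ∀ (m : ℕ), 1 ≤ m → ∀ b ∈ 𝒜 m, r b (yg g) = 0 → b ∈ Ng := by
      intro m hm b hbm hbr
      exact Submodule.mem_iSup_of_mem ⟨m, hm⟩ ⟨hbm, by simpa using hbr⟩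
    have hmulNg_left : ∀ a ∈ 𝒜 0, ∀ b ∈ Ng, a * b ∈ Ng := by
      intro a ha b hb
      refine Submodule.iSup_induction' (motive := fun b _ => a * b ∈ Ng) _ ?_ ?_ ?_ hb
      · rintro ⟨m, hm⟩ b ⟨hbm, hbk⟩
        refine hmem_Ng m hm _ (by simpa using hmul ha hbm) ?_
        have hbr : r b (yg g) = 0 := by simpa using hbk
        rw [hrmul g a b, hbr, zero_mul]
      · show a * 0 ∈ Ng
        rw [mul_zero]; exact zero_mem _
      · intro u v _ _ hu hv
        show a * (u + v) ∈ Ng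
        rw [mul_add]; exact add_mem hu hv
    have hmulNg_right : ∀ b ∈ Ng, ∀ a ∈ 𝒜 0, b * a ∈ Ng := by
      intro b hb a ha
      refine Submodule.iSup_induction' (motive := fun b _ => b * a ∈ Ng) _ ?_ ?_ ?_ hb
      · rintro ⟨m, hm⟩ b ⟨hbm, hbk⟩
        refine hmem_Ng m hm _ (by simpa using hmul hbm ha) ?_
        have hbr : r b (yg g) = 0 := by simpa using hbk
        rw [hrmul g b a, hbr, mul_zero]
      · show (0 : H) * a ∈ Ng
        rw [zero_mul]; exact zero_mem _
      · intro u v _ _ hu hv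
        show (u + v) * a ∈ Ng
        rw [add_mul]; exact add_mem hu hv
    have hmulNg_both : ∀ b ∈ Ng, ∀ b' ∈ Ng, b * b' ∈ Ng := by
      intro b hb b' hb'
      refine Submodule.iSup_induction' (motive := fun b' _ => b * b' ∈ Ng) _ ?_ ?_ ?_ hb'
      · rintro ⟨m, hm⟩ b' ⟨hbm', hbk'⟩
        refine Submodule.iSup_induction' (motive := fun b _ => b * b' ∈ Ng) _ ?_ ?_ ?_ hb
        · rintro ⟨m', hm'⟩ bb ⟨hbm'', hbk''⟩
          refine hmem_Ng (m' + m) (le_trans hm' (Nat.le_add_right _ _)) _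
            (hmul hbm'' hbm') ?_
          have hbr : r b' (yg g) = 0 := by simpa using hbk'
          rw [hrmul g bb b', hbr, zero_mul]
        · show (0 : H) * b' ∈ Ng
          rw [zero_mul]; exact zero_mem _
        · intro u v _ _ hu hv
          show (u + v) * b' ∈ Ng
          rw [add_mul]; exact add_mem hu hv
      · show b * 0 ∈ Ng
        rw [mul_zero]; exact zero_mem _
      · intro u v _ _ hu hv
        show b * (u + v) ∈ Ng
        rw [mul_add]; exact add_mem hu hv
    set Mg : Submodule 𝕜 H := 𝒜 0 ⊔ Ng with hMgdef
    have hMg_mul : ∀ a b : H, a ∈ Mg → b ∈ Mg → a * b ∈ Mg := by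
      intro a b ha hb
      rw [hMgdef, Submodule.mem_sup] at ha hb
      obtain ⟨a0, ha0, an, han, rfl⟩ := ha
      obtain ⟨b0, hb0, bn, hbn, rfl⟩ := hb
      have hexp : (a0 + an) * (b0 + bn)
          = a0 * b0 + (a0 * bn + (an * b0 + an * bn)) := by noncomm_ring
      rw [hexp]
      refine Submodule.add_mem _ (Submodule.mem_sup_left (by simpa using hmul ha0 hb0)) ?_
      refine Submodule.mem_sup_right (add_mem (hmulNg_left _ ha0 _ hbn)
        (add_mem (hmulNg_right _ han _ hb0) (hmulNg_both _ han _ hbn)))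
    have hMg_top : ∀ h : H, h ∈ Mg := by
      intro h
      have hsub : Set.range ⇑gl ∪ Set.range x ⊆ (Mg.toSubalgebra
          (Submodule.mem_sup_left h1mem) hMg_mul : Subalgebra 𝕜 H) := by
        rintro _ (⟨γ, rfl⟩ | ⟨i, rfl⟩)
        · exact Submodule.mem_sup_left (hgl_mem0 γ)
        · exact Submodule.mem_sup_right
            (hmem_Ng 1 le_rfl _ (hx_mem i) (hkey4 g i).1)
      have := Algebra.adjoin_le hsub
      rw [hgen] at this
      exact this trivial
    intro n hn h hmem
    obtain ⟨a, ha, b, hb, hab⟩ := Submodule.mem_sup.mp (hMg_top h)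
    have hdeg : h ∈ ⨆ m : {m : ℕ // 1 ≤ m}, 𝒜 m := Submodule.mem_iSup_of_mem ⟨n, hn⟩ hmem
    have hadeg : a ∈ ⨆ m : {m : ℕ // 1 ≤ m}, 𝒜 m := by
      have : a = h - b := eq_sub_of_add_eq hab
      rw [this]
      exact sub_mem hdeg (hNg_deg hb)
    have hdisj : Disjoint (𝒜 0) (⨆ m : {m : ℕ // 1 ≤ m}, 𝒜 m) := by
      refine (hinternal.submodule_iSupIndep 0).mono_right ?_
      refine iSup_le fun m => ?_
      exact le_iSup₂ (f := fun (j : ℕ) (_ : j ≠ 0) => 𝒜 j) m.1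
        (Nat.one_le_iff_ne_zero.mp m.2)
    have ha0 : a = 0 := Submodule.disjoint_def.mp hdisj a ha hadeg
    have hhb : h = b := by rw [← hab, ha0, zero_add]
    rw [hhb]
    exact hNg_ker b hb
  -- conclusion 5
  have conc5 : ∀ n : ℕ, 1 ≤ n → ∀ h ∈ 𝒜 n, ∀ y : K, r h y = 0 := by
    intro n hn h hmem y
    have hspan : y ∈ Submodule.span 𝕜 (Set.range yg) := by
      have h1 : Submodule.map ι.toLinearMap (Submodule.span 𝕜 (Set.range yg))
          = Submodule.span 𝕜 (gl '' (G : Set Γ)) := by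
        rw [Submodule.map_span]
        congr 1
        ext h'
        constructor
        · rintro ⟨_, ⟨g, rfl⟩, rfl⟩
          exact ⟨(g : Γ), g.2, (hygspec g).symm ▸ rfl⟩
        · rintro ⟨γ, hγ, rfl⟩
          exact ⟨yg ⟨γ, hγ⟩, ⟨⟨γ, hγ⟩, rfl⟩, hygspec ⟨γ, hγ⟩⟩
      have h2 : ι y ∈ Submodule.map ι.toLinearMap (Submodule.span 𝕜 (Set.range yg)) := by
        rw [h1, ← conc1]
        exact ⟨y, rfl⟩
      obtain ⟨y', hy', heq⟩ := h2
      rwa [show y' = y from hι heq] at hy'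
    refine Submodule.span_induction ?_ ?_ ?_ ?_ hspan
    · rintro _ ⟨g, rfl⟩
      exact hvanish_yg g n hn h hmem
    · simp
    · intro y1 y2 _ _ e1 e2
      rw [map_add, e1, e2, add_zero]
    · intro c y1 _ e1
      rw [map_smul, e1, smul_zero]
  exact ⟨G, hcent, Φ, conc1, conc2, conc3, conc4, conc5⟩
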